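/- (Differential consequences of the parabolicity PDE, Section 8) Let U ⊆ ℝ² be open and let F : U → ℝ be three times continuously differentiable, with F_xx(p) ≠ 0 for every p ∈ U and F_xx·F_yy = (F_xy)² identically on U. Then identically on U: F_xyy = 2·F_xy·F_xxy/F_xx − (F_xy)²·F_xxx/(F_xx)², and F_yyy = 3·(F_xy)²·F_xxy/(F_xx)² − 2·(F_xy)³·F_xxx/(F_xx)³. -/

import Mathlib

noncomputable def pd (v : ℝ × ℝ) (f : ℝ × ℝ → ℝ) : ℝ × ℝ → ℝ := fun p => fderiv ℝ f p v

lemma contDiffAt_pd {n : WithTop ℕ∞} {f : ℝ × ℝ → ℝ} {p : ℝ × ℝ} (v : ℝ × ℝ)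
    (hf : ContDiffAt ℝ (n + 1) f p) : ContDiffAt ℝ n (pd v f) p :=
  ((ContinuousLinearMap.apply ℝ ℝ v).contDiff.contDiffAt).comp p (hf.fderiv_right le_rfl)

lemma hasFDerivAt_pd {f : ℝ × ℝ → ℝ} {p : ℝ × ℝ} (v : ℝ × ℝ)
    (hf : ContDiffAt ℝ 2 f p) :
    HasFDerivAt (pd v f)
      ((ContinuousLinearMap.apply ℝ ℝ v).comp (fderiv ℝ (fderiv ℝ f) p)) p := by
  have h : ContDiffAt ℝ 1 (fderiv ℝ f) p := hf.fderiv_right (by norm_num)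
  exact ((ContinuousLinearMap.apply ℝ ℝ v).hasFDerivAt).comp p
    (h.differentiableAt one_ne_zero).hasFDerivAt

lemma pd_pd {f : ℝ × ℝ → ℝ} {p : ℝ × ℝ} (v w : ℝ × ℝ) (hf : ContDiffAt ℝ 2 f p) :
    pd w (pd v f) p = fderiv ℝ (fderiv ℝ f) p w v := by
  show fderiv ℝ (pd v f) p w = _
  rw [(hasFDerivAt_pd v hf).fderiv]; rfl

lemma pd_swap {f : ℝ × ℝ → ℝ} {p : ℝ × ℝ} (v w : ℝ × ℝ) (hf : ContDiffAt ℝ 2 f p) :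
    pd w (pd v f) p = pd v (pd w f) p := by
  rw [pd_pd v w hf, pd_pd w v hf]
  exact hf.isSymmSndFDerivAt (by simp) w v

lemma pd_congr {f g : ℝ × ℝ → ℝ} {p : ℝ × ℝ} (v : ℝ × ℝ) (h : f =ᶠ[nhds p] g) :
    pd v f p = pd v g p := by
  simp [pd, h.fderiv_eq]

lemma pd_zero {f : ℝ × ℝ → ℝ} {p : ℝ × ℝ} (v : ℝ × ℝ) (h : f =ᶠ[nhds p] fun _ => 0) :
    pd v f p = 0 := by
  rw [pd_congr v h]; simp [pd]

lemma pd_mul {f g : ℝ × ℝ → ℝ} {p : ℝ × ℝ} (v : ℝ × ℝ)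
    (hf : DifferentiableAt ℝ f p) (hg : DifferentiableAt ℝ g p) :
    pd v (fun q => f q * g q) p = pd v f p * g p + f p * pd v g p := by
  simp only [pd]
  rw [fderiv_fun_mul hf hg]
  simp [mul_comm]
  ring


/-- Partial derivative in the `x`-direction. -/
noncomputable def pdx (f : ℝ × ℝ → ℝ) : ℝ × ℝ → ℝ := fun p => fderiv ℝ f p (1, 0)

/-- Partial derivative in the `y`-direction. -/
noncomputable def pdy (f : ℝ × ℝ → ℝ) : ℝ × ℝ → ℝ := fun p => fderiv ℝ f p (0, 1)

lemma pdx_eq : pdx = pd (1, 0) := rfl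
lemma pdy_eq : pdy = pd (0, 1) := rfl

/-- **Differential consequences of the parabolicity PDE** (Section 8).
If `F` is `C³` on an open set `U`, `F_xx ≠ 0` on `U` and
`F_xx · F_yy = (F_xy)²` on `U`, then the third-order derivatives
`F_xyy` and `F_yyy` are determined by `F_xx, F_xy, F_xxx, F_xxy`. -/
theorem parabolic_pde_consequences
    (U : Set (ℝ × ℝ)) (hU : IsOpen U) (F : ℝ × ℝ → ℝ)
    (hF : ContDiffOn ℝ 3 F U)
    (hxx : ∀ p ∈ U, pdx (pdx F) p ≠ 0)
    (hpar : ∀ p ∈ U, pdx (pdx F) p * pdy (pdy F) p = (pdy (pdx F) p) ^ 2) :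
    ∀ p ∈ U,
      (pdy (pdy (pdx F)) p
          = 2 * pdy (pdx F) p * pdy (pdx (pdx F)) p / pdx (pdx F) p
            - (pdy (pdx F) p) ^ 2 * pdx (pdx (pdx F)) p / (pdx (pdx F) p) ^ 2) ∧
      (pdy (pdy (pdy F)) p
          = 3 * (pdy (pdx F) p) ^ 2 * pdy (pdx (pdx F)) p / (pdx (pdx F) p) ^ 2
            - 2 * (pdy (pdx F) p) ^ 3 * pdx (pdx (pdx F)) p / (pdx (pdx F) p) ^ 3) := by
  rw [pdx_eq, pdy_eq] at *
  set x : ℝ × ℝ := (1, 0)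
  set y : ℝ × ℝ := (0, 1)
  intro p hp
  have h3 : ∀ q ∈ U, ContDiffAt ℝ 3 F q := fun q hq => hF.contDiffAt (hU.mem_nhds hq)
  have h2 : ∀ q ∈ U, ContDiffAt ℝ 2 F q := fun q hq => (h3 q hq).of_le (by norm_num)
  -- second derivatives of F are C¹, hence differentiable, at points of U
  have hd2 : ∀ v w : ℝ × ℝ, ∀ q ∈ U, DifferentiableAt ℝ (pd w (pd v F)) q := by
    intro v w q hq
    have : ContDiffAt ℝ 1 (pd w (pd v F)) q :=
      contDiffAt_pd w (contDiffAt_pd v ((h3 q hq).of_le (by norm_num : ((1:WithTop ℕ∞)+1)+1 ≤ 3)))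
    exact this.differentiableAt one_ne_zero
  -- pd x (pd y F) = pd y (pd x F) eventually near p
  have hswapF : (fun q => pd x (pd y F) q) =ᶠ[nhds p] (fun q => pd y (pd x F) q) := by
    filter_upwards [hU.mem_nhds hp] with q hq
    exact pd_swap y x (h2 q hq)
  -- pd x F is C² at p
  have hpx2 : ContDiffAt ℝ 2 (pd x F) p :=
    contDiffAt_pd x ((h3 p hp).of_le (by norm_num : ((2:WithTop ℕ∞))+1 ≤ 3))
  have hpy2 : ContDiffAt ℝ 2 (pd y F) p :=
    contDiffAt_pd y ((h3 p hp).of_le (by norm_num : ((2:WithTop ℕ∞))+1 ≤ 3))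
  -- mixed third derivative identities
  have sw1 : pd x (pd y (pd x F)) p = pd y (pd x (pd x F)) p := pd_swap y x hpx2
  have sw2 : pd x (pd y (pd y F)) p = pd y (pd y (pd x F)) p := by
    rw [pd_swap y x hpy2]
    exact pd_congr y hswapF
  -- the parabolicity function vanishes on U
  have hg : (fun q => pd x (pd x F) q * pd y (pd y F) q
      - pd y (pd x F) q * pd y (pd x F) q) =ᶠ[nhds p] fun _ => 0 := by
    filter_upwards [hU.mem_nhds hp] with q hq
    have := hpar q hq
    nlinarith [this]
  have expand : ∀ v : ℝ × ℝ,
      pd v (fun q => pd x (pd x F) q * pd y (pd y F) q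
        - pd y (pd x F) q * pd y (pd x F) q) p
      = pd v (pd x (pd x F)) p * pd y (pd y F) p
        + pd x (pd x F) p * pd v (pd y (pd y F)) p
        - (pd v (pd y (pd x F)) p * pd y (pd x F) p
            + pd y (pd x F) p * pd v (pd y (pd x F)) p) := by
    intro v
    have d1 := hd2 x x p hp
    have d2 := hd2 y y p hp
    have d3 := hd2 x y p hp
    have h1 : DifferentiableAt ℝ (fun q => pd x (pd x F) q * pd y (pd y F) q) p := d1.mul d2
    have h2' : DifferentiableAt ℝ (fun q => pd y (pd x F) q * pd y (pd x F) q) p := d3.mul d3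
    have : pd v (fun q => (fun q => pd x (pd x F) q * pd y (pd y F) q) q
        - (fun q => pd y (pd x F) q * pd y (pd x F) q) q) p
        = pd v (fun q => pd x (pd x F) q * pd y (pd y F) q) p
          - pd v (fun q => pd y (pd x F) q * pd y (pd x F) q) p := by
      show (fderiv ℝ (fun q => (fun q => pd x (pd x F) q * pd y (pd y F) q) q
          - (fun q => pd y (pd x F) q * pd y (pd x F) q) q) p) v = _
      rw [fderiv_fun_sub h1 h2']
      rfl
    rw [this, pd_mul v d1 d2, pd_mul v d3 d3]
  have eqX := expand x
  have eqY := expand y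
  rw [pd_zero x hg] at eqX
  rw [pd_zero y hg] at eqY
  rw [sw1, sw2] at eqX
  -- abbreviations
  set a := pd x (pd x F) p with ha
  set b := pd y (pd x F) p with hb
  set c := pd y (pd y F) p with hc
  set A := pd x (pd x (pd x F)) p
  set B := pd y (pd x (pd x F)) p
  set C := pd y (pd y (pd x F)) p
  set D := pd y (pd y (pd y F)) p
  have hpde : a * c = b ^ 2 := hpar p hp
  have hane : a ≠ 0 := hxx p hp
  constructor
  · field_simp
    linear_combination (-a)*eqX - A*hpde
  · field_simp
    linear_combination (-(a^2))*eqY - 2*a*b*eqX - (a*B+2*b*A)*hpde
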